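/- Let (V,Q) and (W,Q') be non-degenerate equivariant quadratic KG-modules with (V,Q) metabolic. Then (W,Q') is metabolic if and only if the orthogonal direct sum (W,Q') ⊥ (V,Q) is metabolic. -/

import Mathlib

open QuadraticMap

variable {K : Type*} [Field K] {G : Type*} [Group G]
variable {V W : Type*} [AddCommGroup V] [Module K V] [AddCommGroup W] [Module K W]

/-- `U` is a `KG`-submodule, i.e. invariant under the representation `ρ`. -/
def IsSubrep (ρ : Representation K G V) (U : Submodule K V) : Prop :=
  ∀ g : G, ∀ v ∈ U, ρ g v ∈ U

/-- The quadratic form `Q` is `G`-invariant. -/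
def GInvariantQF (ρ : Representation K G V) (Q : QuadraticForm K V) : Prop :=
  ∀ g v, Q (ρ g v) = Q v

/-- Orthogonal complement of a submodule with respect to the polarization of `Q`. -/
def qperp (Q : QuadraticForm K V) (U : Submodule K V) : Submodule K V :=
  LinearMap.BilinForm.orthogonal Q.polarBilin U

/-- `Q` is non-degenerate: the radical of its polarization is zero. -/
def QNondeg (Q : QuadraticForm K V) : Prop :=
  LinearMap.BilinForm.Nondegenerate Q.polarBilin

/-- `(V, Q)` is metabolic: there is a `KG`-submodule `N` with `N = N^⊥` and `Q(N) = 0`. -/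
def Metabolic (ρ : Representation K G V) (Q : QuadraticForm K V) : Prop :=
  ∃ N : Submodule K V, IsSubrep ρ N ∧ N = qperp Q N ∧ ∀ v ∈ N, Q v = 0

/-- `(V, Q)` is anisotropic: `Q` does not vanish on any non-zero `KG`-submodule. -/
def AnisotropicRep (ρ : Representation K G V) (Q : QuadraticForm K V) : Prop :=
  ∀ U : Submodule K V, IsSubrep ρ U → (∀ v ∈ U, Q v = 0) → U = ⊥

/-- The product (orthogonal direct sum) of two representations. -/
def prodRep (ρ : Representation K G V) (σ : Representation K G W) :
    Representation K G (V × W) :=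
  ⟨⟨fun g => (ρ g).prodMap (σ g), by ext v <;> simp⟩, fun g h => by ext v <;> simp⟩

/-- `V` is a simple `KG`-module. -/
def SimpleRep (ρ : Representation K G V) : Prop :=
  Nontrivial V ∧ ∀ U : Submodule K V, IsSubrep ρ U → U = ⊥ ∨ U = ⊤

/-- `V` is a self-dual `KG`-module. -/
def SelfDualRep (ρ : Representation K G V) : Prop :=
  ∃ f : V ≃ₗ[K] Module.Dual K V, ∀ g v, f (ρ g v) = ρ.dual g (f v)

lemma orth_sup {K V : Type*} [Field K] [AddCommGroup V] [Module K V]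
    (B : LinearMap.BilinForm K V) (X Y : Submodule K V) :
    B.orthogonal (X ⊔ Y) = B.orthogonal X ⊓ B.orthogonal Y := by
  ext z
  simp only [LinearMap.BilinForm.mem_orthogonal_iff, Submodule.mem_inf]
  constructor
  · exact fun h => ⟨fun n hn => h n (Submodule.mem_sup_left hn),
      fun n hn => h n (Submodule.mem_sup_right hn)⟩
  · rintro ⟨h1, h2⟩ n hn
    obtain ⟨x, hx, y, hy, rfl⟩ := Submodule.mem_sup.1 hn
    have e1 := h1 x hx
    have e2 := h2 y hy
    rw [LinearMap.BilinForm.add_left, e1, e2, add_zero]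

lemma orth_inf {K V : Type*} [Field K] [AddCommGroup V] [Module K V] [FiniteDimensional K V]
    {B : LinearMap.BilinForm K V} (hB : B.Nondegenerate) (hB₀ : B.IsRefl)
    (X Y : Submodule K V) :
    B.orthogonal (X ⊓ Y) = B.orthogonal X ⊔ B.orthogonal Y := by
  conv_rhs => rw [← LinearMap.BilinForm.orthogonal_orthogonal hB hB₀
    (B.orthogonal X ⊔ B.orthogonal Y)]
  rw [orth_sup, LinearMap.BilinForm.orthogonal_orthogonal hB hB₀,
    LinearMap.BilinForm.orthogonal_orthogonal hB hB₀]

lemma polarBilin_isRefl {K V : Type*} [Field K] [AddCommGroup V] [Module K V]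
    (Q : QuadraticForm K V) : Q.polarBilin.IsRefl := by
  intro x y h
  rw [polarBilin_apply_apply] at *
  rwa [polar_comm]

/-- if `(V,Q)` is metabolic then `(W,Q')` is metabolic iff
`(W,Q') ⊥ (V,Q)` is metabolic. -/
theorem stmt1 [Finite G] [FiniteDimensional K V] [FiniteDimensional K W]
    (ρ : Representation K G V) (Q : QuadraticForm K V)
    (σ : Representation K G W) (Q' : QuadraticForm K W)
    (hinv : GInvariantQF ρ Q) (hnd : QNondeg Q)
    (hinv' : GInvariantQF σ Q') (hnd' : QNondeg Q')
    (hmet : Metabolic ρ Q) :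
    Metabolic σ Q' ↔ Metabolic (prodRep σ ρ) (Q'.prod Q) := by
  obtain ⟨L, hLrep, hLperp, hLQ⟩ := hmet
  have hreflP := polarBilin_isRefl (Q'.prod Q)
  have hndP : LinearMap.BilinForm.Nondegenerate (Q'.prod Q).polarBilin := by
    refine hreflP.nondegenerate_iff_separatingLeft.2 ?_
    intro x hx
    have hw : x.1 = 0 := hnd'.1 x.1 (fun n => by
      have := hx (n, 0)
      simp only [polarBilin_apply_apply, polar_prod, polar_zero_right, add_zero] at this
      simpa using this)
    have hv : x.2 = 0 := hnd.1 x.2 (fun n => by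
      have := hx (0, n)
      simp only [polarBilin_apply_apply, polar_prod, polar_zero_right, add_zero] at this
      simpa using this)
    exact Prod.ext hw hv
  constructor
  · rintro ⟨M, hMrep, hMperp, hMQ⟩
    refine ⟨M.prod L, ?_, ?_, ?_⟩
    · intro g x hx
      obtain ⟨h1, h2⟩ := Submodule.mem_prod.1 hx
      exact Submodule.mem_prod.2 ⟨hMrep g x.1 h1, hLrep g x.2 h2⟩
    · ext x
      simp only [Submodule.mem_prod]
      constructor
      · rintro ⟨h1, h2⟩ n hn
        obtain ⟨hn1, hn2⟩ := Submodule.mem_prod.1 hn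
        have e1 : polar Q' n.1 x.1 = 0 := (hMperp ▸ h1) n.1 hn1
        have e2 : polar Q n.2 x.2 = 0 := (hLperp ▸ h2) n.2 hn2
        show polar (Q'.prod Q) n x = 0
        rw [polar_prod, e1, e2, add_zero]
      · intro h
        constructor
        · rw [hMperp]
          intro m hm
          have := h (m, 0) (Submodule.mem_prod.2 ⟨hm, Submodule.zero_mem L⟩)
          have h0 : polar (Q'.prod Q) (m, 0) x = 0 := this
          rw [polar_prod] at h0
          simpa using h0
        · rw [hLperp]
          intro l hl
          have := h (0, l) (Submodule.mem_prod.2 ⟨Submodule.zero_mem M, hl⟩)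
          have h0 : polar (Q'.prod Q) (0, l) x = 0 := this
          rw [polar_prod] at h0
          simpa using h0
    · intro x hx
      obtain ⟨h1, h2⟩ := Submodule.mem_prod.1 hx
      show Q'.prod Q x = 0
      rw [prod_apply, hMQ x.1 h1, hLQ x.2 h2, add_zero]
  · rintro ⟨N, hNrep, hNperp, hNQ⟩
    set M : Submodule K W := (N ⊓ (⊤ : Submodule K W).prod L).map (LinearMap.fst K W V) with hMdef
    have hMmem : ∀ w : W, w ∈ M ↔ ∃ v ∈ L, (w, v) ∈ N := by
      intro w
      simp only [hMdef, Submodule.mem_map, Submodule.mem_inf, Submodule.mem_prod,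
        LinearMap.fst_apply]
      constructor
      · rintro ⟨⟨a, b⟩, ⟨hN, -, hb⟩, rfl⟩
        exact ⟨b, hb, hN⟩
      · rintro ⟨v, hv, hN⟩
        exact ⟨(w, v), ⟨hN, trivial, hv⟩, rfl⟩
    have hN' : LinearMap.BilinForm.orthogonal (Q'.prod Q).polarBilin N = N := hNperp.symm
    have hTperp : LinearMap.BilinForm.orthogonal (Q'.prod Q).polarBilin
        ((⊤ : Submodule K W).prod L) = (⊥ : Submodule K W).prod L := by
      ext x
      constructor
      · intro hx
        have hw : x.1 = 0 := hnd'.1 x.1 (fun n => by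
          have := hx (n, 0) (Submodule.mem_prod.2 ⟨trivial, Submodule.zero_mem L⟩)
          have h0 : polar (Q'.prod Q) (n, 0) x = 0 := this
          rw [polar_prod, polar_zero_left, add_zero] at h0
          rw [polarBilin_apply_apply, polar_comm]
          exact h0)
        have hv : x.2 ∈ L := by
          rw [hLperp]
          intro l hl
          have := hx (0, l) (Submodule.mem_prod.2 ⟨trivial, hl⟩)
          have h0 : polar (Q'.prod Q) (0, l) x = 0 := this
          rw [polar_prod, polar_zero_left, zero_add] at h0
          exact h0
        exact Submodule.mem_prod.2 ⟨Submodule.mem_bot K |>.2 hw, hv⟩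
      · intro hx n hn
        obtain ⟨h1, h2⟩ := Submodule.mem_prod.1 hx
        obtain ⟨-, hn2⟩ := Submodule.mem_prod.1 hn
        have hx1 : x.1 = 0 := Submodule.mem_bot K |>.1 h1
        have e2 : polar Q n.2 x.2 = 0 := (hLperp ▸ h2) n.2 hn2
        show polar (Q'.prod Q) n x = 0
        rw [polar_prod, hx1, polar_zero_right, e2, add_zero]
    have key : LinearMap.BilinForm.orthogonal (Q'.prod Q).polarBilin
        (N ⊓ (⊤ : Submodule K W).prod L) = N ⊔ (⊥ : Submodule K W).prod L := by
      rw [orth_inf hndP hreflP, hN', hTperp]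
    refine ⟨M, ?_, ?_, ?_⟩
    · intro g w hw
      obtain ⟨v, hv, hN⟩ := (hMmem w).1 hw
      refine (hMmem _).2 ⟨ρ g v, hLrep g v hv, ?_⟩
      exact hNrep g (w, v) hN
    · ext w
      constructor
      · intro hw m hm
        obtain ⟨v, hv, hN⟩ := (hMmem w).1 hw
        obtain ⟨u, hu, hNm⟩ := (hMmem m).1 hm
        have e1 : polar (Q'.prod Q) (m, u) (w, v) = 0 := (hNperp ▸ hN) (m, u) hNm
        have e2 : polar Q u v = 0 := (hLperp ▸ hv) u hu
        rw [polar_prod, e2, add_zero] at e1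
        exact e1
      · intro hw
        have hwperp : (w, (0 : V)) ∈ LinearMap.BilinForm.orthogonal (Q'.prod Q).polarBilin
            (N ⊓ (⊤ : Submodule K W).prod L) := by
          intro n hn
          obtain ⟨hn1, hn2⟩ := Submodule.mem_inf.1 hn
          have hnM : n.1 ∈ M := (hMmem n.1).2 ⟨n.2, (Submodule.mem_prod.1 hn2).2, hn1⟩
          have e1 : polar Q' n.1 w = 0 := hw n.1 hnM
          show polar (Q'.prod Q) n (w, 0) = 0
          rw [polar_prod, e1, polar_zero_right, add_zero]
        rw [key] at hwperp
        obtain ⟨a, ha, b, hb, hab⟩ := Submodule.mem_sup.1 hwperp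
        obtain ⟨hb1, hb2⟩ := Submodule.mem_prod.1 hb
        have hb1' : b.1 = 0 := Submodule.mem_bot K |>.1 hb1
        have h1 : a.1 = w := by
          have := congrArg Prod.fst hab
          simpa [hb1'] using this
        have h2 : a.2 = -b.2 := by
          have := congrArg Prod.snd hab
          simp only [Prod.snd_add] at this
          exact eq_neg_of_add_eq_zero_left this
        refine (hMmem w).2 ⟨a.2, ?_, ?_⟩
        · rw [h2]; exact Submodule.neg_mem L hb2
        · have : (a.1, a.2) = a := rfl
          rw [← h1]; rw [this]; exact ha
    · intro w hw
      obtain ⟨v, hv, hN⟩ := (hMmem w).1 hw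
      have h0 := hNQ (w, v) hN
      rw [prod_apply] at h0
      have h1 := hLQ v hv
      simp only [h1, add_zero] at h0
      exact h0
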